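/- Let n ≥ 1 and 1 ≤ t ≤ n+1. Then Alice(T_n(t)) holds if and only if t ≤ ⌈n/2⌉. -/
import Mathlib


/-- The board `[n] = {1, …, n}` as a finite set of natural numbers. -/
def board (n : ℕ) : Finset ℕ := Finset.Icc 1 n

/-- The order-preserving relabelling of `[n] \ {x}` onto `[n-1]`:
elements below `x` are unchanged, elements above `x` drop by one. -/
def stdElt (x r : ℕ) : ℕ := if r < x then r else r - 1

/-- Standardise a set avoiding `x`: relabel it via `stdElt x`. -/
def stdSet (x : ℕ) (S : Finset ℕ) : Finset ℕ := S.image (stdElt x)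

/-- The standardised section `F_x^+ = { S \ {x} : x ∈ S ∈ F }`,
viewed as a family of subsets of `[n-1]`. -/
def secPlus (F : Set (Finset ℕ)) (x : ℕ) : Set (Finset ℕ) :=
  {T | ∃ S ∈ F, x ∈ S ∧ T = stdSet x (S.erase x)}

/-- The standardised section `F_x^- = { S ∈ F : x ∉ S }`,
viewed as a family of subsets of `[n-1]`. -/
def secMinus (F : Set (Finset ℕ)) (x : ℕ) : Set (Finset ℕ) :=
  {T | ∃ S ∈ F, x ∉ S ∧ T = stdSet x S}

mutual
  /-- `AliceWins n k F`: Alice wins her `F`-game, where `F` is a family of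
  `k`-subsets of `[n]`.  Terminal games (`k = 0` or `k = n`) are won iff `F`
  is nonempty; otherwise Alice needs a first offer `x` such that Bob wins both
  his `F_x^+`-game and his `F_x^-`-game. -/
  def AliceWins (n k : ℕ) (F : Set (Finset ℕ)) : Prop :=
    if h : k = 0 ∨ n ≤ k then F.Nonempty
    else ∃ x ∈ board n,
      BobWins (n - 1) (k - 1) (secPlus F x) ∧ BobWins (n - 1) k (secMinus F x)
  termination_by n
  decreasing_by all_goals omega

  /-- `BobWins n k F`: Bob wins his `F`-game, where `F` is a family of
  `k`-subsets of `[n]`.  Terminal games (`k = 0` or `k = n`) are won iff `F`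
  is nonempty; otherwise Bob needs, for every first offer `x`, that Alice wins
  her `F_x^+`-game or her `F_x^-`-game. -/
  def BobWins (n k : ℕ) (F : Set (Finset ℕ)) : Prop :=
    if h : k = 0 ∨ n ≤ k then F.Nonempty
    else ∀ x ∈ board n,
      AliceWins (n - 1) (k - 1) (secPlus F x) ∨ AliceWins (n - 1) k (secMinus F x)
  termination_by n
  decreasing_by all_goals omega
end

/-- `S ⪯ T` in the pointwise order: the increasing enumerations of `S` and `T`
have the same length and are pointwise `≤`. -/
def PointwiseLE (S T : Finset ℕ) : Prop :=
  List.Forall₂ (· ≤ ·) (S.sort (· ≤ ·)) (T.sort (· ≤ ·))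

/-- `F` consists of `k`-element subsets of `[n]`. -/
def IsFamilyOn (n k : ℕ) (F : Set (Finset ℕ)) : Prop :=
  ∀ S ∈ F, S ⊆ board n ∧ S.card = k

/-- `F` is pointwise-increasing as a family of `k`-subsets of `[n]`:
it is upwards closed in the pointwise order. -/
def IsIncreasingFamily (n k : ℕ) (F : Set (Finset ℕ)) : Prop :=
  ∀ S T : Finset ℕ, S ∈ F → T ⊆ board n → T.card = k → PointwiseLE S T → T ∈ F

/-- The singleton family `T_n(t)`. -/
def Fam (n t : ℕ) : Set (Finset ℕ) := {S : Finset ℕ | ∃ r : ℕ, t ≤ r ∧ r ≤ n ∧ S = {r}}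

lemma fam_nonempty (n t : ℕ) : (Fam n t).Nonempty ↔ t ≤ n := by
  constructor
  · rintro ⟨S, r, h1, h2, rfl⟩; omega
  · intro h; exact ⟨{t}, t, le_refl _, h, rfl⟩

lemma secPlus_nonempty (n t x : ℕ) :
    (secPlus (Fam n t) x).Nonempty ↔ t ≤ x ∧ x ≤ n := by
  constructor
  · rintro ⟨T, S, ⟨r, h1, h2, rfl⟩, hx, hT⟩
    rw [Finset.mem_singleton] at hx
    omega
  · rintro ⟨h1, h2⟩
    refine ⟨∅, {x}, ⟨x, h1, h2, rfl⟩, Finset.mem_singleton_self x, ?_⟩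
    simp [stdSet]

lemma secMinus_fam (n t x : ℕ) (hx1 : 1 ≤ x) (hxn : x ≤ n) (ht1 : 1 ≤ t) :
    secMinus (Fam n t) x = Fam (n - 1) (if x < t then t - 1 else t) := by
  ext T
  constructor
  · rintro ⟨S, ⟨r, h1, h2, rfl⟩, hxS, rfl⟩
    rw [Finset.mem_singleton] at hxS
    refine ⟨stdElt x r, ?_, ?_, ?_⟩
    · unfold stdElt; split <;> split <;> omega
    · unfold stdElt; split <;> omega
    · simp [stdSet]
  · rintro ⟨r', h1, h2, rfl⟩
    refine ⟨{if r' < x then r' else r' + 1}, ⟨if r' < x then r' else r' + 1, ?_, ?_, rfl⟩, ?_, ?_⟩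
    · split at h1 <;> split <;> omega
    · split <;> omega
    · rw [Finset.mem_singleton]; split at h1 <;> split <;> omega
    · simp only [stdSet, Finset.image_singleton]
      congr 1
      unfold stdElt
      by_cases h : r' < x
      · rw [if_pos h, if_pos h]
      · rw [if_neg h, if_neg (by omega : ¬ r' + 1 < x)]
        omega

lemma main_lemma : ∀ n : ℕ, ∀ t : ℕ, 1 ≤ t →
    ((1 ≤ n → (AliceWins n 1 (Fam n t) ↔ t ≤ (n + 1) / 2)) ∧
     (1 ≤ n → (BobWins n 1 (Fam n t) ↔ t ≤ n / 2 + 1))) := by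
  intro n
  induction n using Nat.strong_induction_on with
  | _ n ih =>
  intro t ht
  constructor
  · intro hn
    rw [AliceWins]
    by_cases h1 : n = 1
    · subst h1
      rw [dif_pos (by omega), fam_nonempty]
    · have hn2 : 2 ≤ n := by omega
      rw [dif_neg (by omega)]
      constructor
      · rintro ⟨x, hx, hplus, hminus⟩
        have hx' := Finset.mem_Icc.mp hx
        rw [BobWins, dif_pos (Or.inl rfl)] at hplus
        have htx := (secPlus_nonempty n t x).mp hplus
        rw [secMinus_fam n t x (by omega) (by omega) ht, if_neg (by omega)] at hminus
        have := ((ih (n - 1) (by omega) t ht).2 (by omega)).mp hminus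
        omega
      · intro hle
        refine ⟨t, Finset.mem_Icc.mpr ⟨ht, by omega⟩, ?_, ?_⟩
        · rw [BobWins, dif_pos (Or.inl rfl)]
          exact (secPlus_nonempty n t t).mpr ⟨le_refl t, by omega⟩
        · rw [secMinus_fam n t t ht (by omega) ht, if_neg (by omega)]
          exact ((ih (n - 1) (by omega) t ht).2 (by omega)).mpr (by omega)
  · intro hn
    rw [BobWins]
    by_cases h1 : n = 1
    · subst h1
      rw [dif_pos (by omega), fam_nonempty]
    · have hn2 : 2 ≤ n := by omega
      rw [dif_neg (by omega)]
      constructor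
      · intro hall
        by_cases ht2 : t ≤ 1
        · omega
        · have h := hall 1 (Finset.mem_Icc.mpr ⟨le_refl 1, by omega⟩)
          rcases h with h | h
          · rw [AliceWins, dif_pos (Or.inl rfl)] at h
            have := (secPlus_nonempty n t 1).mp h
            omega
          · rw [secMinus_fam n t 1 (le_refl 1) (by omega) ht, if_pos (by omega)] at h
            have := ((ih (n - 1) (by omega) (t - 1) (by omega)).1 (by omega)).mp h
            omega
      · intro hle x hx
        have hx' := Finset.mem_Icc.mp hx
        by_cases hxt : t ≤ x
        · left
          rw [AliceWins, dif_pos (Or.inl rfl)]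
          exact (secPlus_nonempty n t x).mpr ⟨hxt, hx'.2⟩
        · right
          rw [secMinus_fam n t x (by omega) (by omega) ht, if_pos (by omega)]
          exact ((ih (n - 1) (by omega) (t - 1) (by omega)).1 (by omega)).mpr (by omega)

/-- Alice wins her game on the singleton family
`T_n(t) = { {r} : t ≤ r ≤ n }` if and only if `t ≤ ⌈n/2⌉`. -/
theorem alice_singleton_family (n t : ℕ) (hn : 1 ≤ n) (ht1 : 1 ≤ t) (ht : t ≤ n + 1) :
    AliceWins n 1 {S : Finset ℕ | ∃ r : ℕ, t ≤ r ∧ r ≤ n ∧ S = {r}} ↔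
      t ≤ (n + 1) / 2 := by
  exact (main_lemma n t ht1).1 hn
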